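/- For any convex body K ⊆ ℝⁿ, convex function h : ℝⁿ → ℝ, and temperature T > 0, if X is distributed on K with density proportional to x ↦ exp(−h(x)/T), then E[h(X)] ≤ nT + min_{x ∈ K} h(x). -/

import Mathlib

open MeasureTheory

open Set Real
open scoped ENNReal


lemma hasDerivAt_w (n : ℕ) (s : ℝ) :
    HasDerivAt (fun s : ℝ => s ^ (n+1) * Real.exp (-s))
      ((((n:ℝ)+1) - s) * s ^ n * Real.exp (-s)) s := by
  have h1 : HasDerivAt (fun s : ℝ => s ^ (n+1)) (((n:ℝ)+1) * s ^ n) s := by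
    simpa using hasDerivAt_pow (n+1) s
  have h2 : HasDerivAt (fun s : ℝ => Real.exp (-s)) (-Real.exp (-s)) s := by
    have := (Real.hasDerivAt_exp (-s)).comp s (hasDerivAt_neg s); rw [mul_neg_one] at this; exact this
  have := h1.mul h2
  refine this.congr_deriv ?_
  ring

lemma tendsto_w (n : ℕ) :
    Filter.Tendsto (fun s : ℝ => s ^ (n+1) * Real.exp (-s)) Filter.atTop (nhds 0) :=
  Real.tendsto_pow_mul_exp_neg_atTop_nhds_zero (n+1)

lemma integral_w_Ioi (n : ℕ) :
    ∫ s in Ioi ((n:ℝ)+1), (s - ((n:ℝ)+1)) * s ^ n * Real.exp (-s)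
      = ((n:ℝ)+1) ^ (n+1) * Real.exp (-((n:ℝ)+1)) := by
  have H := integral_Ioi_of_hasDerivAt_of_nonneg (g := fun s : ℝ => -(s ^ (n+1) * Real.exp (-s)))
    (g' := fun s => (s - ((n:ℝ)+1)) * s ^ n * Real.exp (-s)) (a := (n:ℝ)+1) (l := 0)
    ?_ ?_ ?_ ?_
  · rw [H]; ring
  · exact ((hasDerivAt_w n ((n:ℝ)+1)).neg.continuousAt).continuousWithinAt
  · intro x hx
    have := (hasDerivAt_w n x).neg
    refine this.congr_deriv ?_; ring
  · intro x hx
    have hx0 : (0:ℝ) ≤ x := le_trans (by positivity) (le_of_lt hx)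
    have : (0:ℝ) ≤ x - ((n:ℝ)+1) := sub_nonneg.2 (le_of_lt hx)
    positivity
  · simpa using (tendsto_w n).neg

lemma integrableOn_w_Ioi (n : ℕ) :
    IntegrableOn (fun s : ℝ => (s - ((n:ℝ)+1)) * s ^ n * Real.exp (-s)) (Ioi ((n:ℝ)+1)) := by
  apply integrableOn_Ioi_deriv_of_nonneg (g := fun s : ℝ => -(s ^ (n+1) * Real.exp (-s))) (l := 0)
  · exact ((hasDerivAt_w n ((n:ℝ)+1)).neg.continuousAt).continuousWithinAt
  · intro x hx
    have := (hasDerivAt_w n x).neg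
    refine this.congr_deriv ?_; ring
  · intro x hx
    have hx0 : (0:ℝ) ≤ x := le_trans (by positivity) (le_of_lt hx)
    have : (0:ℝ) ≤ x - ((n:ℝ)+1) := sub_nonneg.2 (le_of_lt hx)
    positivity
  · simpa using (tendsto_w n).neg

lemma integral_w_Ioc (n : ℕ) :
    ∫ s in Ioc (0:ℝ) ((n:ℝ)+1), (((n:ℝ)+1) - s) * s ^ n * Real.exp (-s)
      = ((n:ℝ)+1) ^ (n+1) * Real.exp (-((n:ℝ)+1)) := by
  have h01 : (0:ℝ) ≤ (n:ℝ)+1 := by positivity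
  rw [← intervalIntegral.integral_of_le h01]
  have := intervalIntegral.integral_eq_sub_of_hasDerivAt
    (f := fun s : ℝ => s ^ (n+1) * Real.exp (-s))
    (f' := fun s => (((n:ℝ)+1) - s) * s ^ n * Real.exp (-s))
    (a := (0:ℝ)) (b := (n:ℝ)+1) ?_ ?_
  · rw [this]; simp
  · intro x hx
    have := hasDerivAt_w n x
    convert this using 1
  · apply Continuous.intervalIntegrable
    continuity


lemma hasDerivAt_texp (t : ℝ) :
    HasDerivAt (fun t : ℝ => -((t+1) * Real.exp (-t))) (t * Real.exp (-t)) t := by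
  have h2 : HasDerivAt (fun s : ℝ => Real.exp (-s)) (-Real.exp (-t)) t := by
    have := (Real.hasDerivAt_exp (-t)).comp t (hasDerivAt_neg t); rw [mul_neg_one] at this; exact this
  have h1 : HasDerivAt (fun s : ℝ => s + 1) 1 t := by
    simpa using (hasDerivAt_id t).add_const 1
  have := (h1.mul h2).neg
  refine this.congr_deriv ?_
  ring

lemma tendsto_texp :
    Filter.Tendsto (fun t : ℝ => -((t+1) * Real.exp (-t))) Filter.atTop (nhds 0) := by
  have h1 := Real.tendsto_pow_mul_exp_neg_atTop_nhds_zero 1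
  have h0 := Real.tendsto_exp_neg_atTop_nhds_zero
  have := (h1.add h0).neg
  simp only [pow_one, neg_zero, add_zero] at this
  convert this using 2 with t
  ring

lemma integral_texp_Ioi {a : ℝ} (ha : 0 ≤ a) :
    ∫ t in Ioi a, t * Real.exp (-t) = (a+1) * Real.exp (-a) := by
  have H := integral_Ioi_of_hasDerivAt_of_nonneg (g := fun t : ℝ => -((t+1) * Real.exp (-t)))
    (g' := fun t => t * Real.exp (-t)) (a := a) (l := 0)
    ((hasDerivAt_texp a).continuousAt).continuousWithinAt
    (fun x _ => hasDerivAt_texp x)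
    (fun x hx => by have : (0:ℝ) ≤ x := le_trans ha (le_of_lt hx); positivity)
    tendsto_texp
  rw [H]; ring

lemma integrableOn_texp_Ioi {a : ℝ} (ha : 0 ≤ a) :
    IntegrableOn (fun t : ℝ => t * Real.exp (-t)) (Ioi a) :=
  integrableOn_Ioi_deriv_of_nonneg ((hasDerivAt_texp a).continuousAt).continuousWithinAt
    (fun x _ => hasDerivAt_texp x)
    (fun x hx => by have : (0:ℝ) ≤ x := le_trans ha (le_of_lt hx); positivity)
    tendsto_texp

lemma integrableOn_exp_Ioi (a : ℝ) :
    IntegrableOn (fun t : ℝ => Real.exp (-t)) (Ioi a) := by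
  simpa using exp_neg_integrableOn_Ioi a one_pos

lemma my_layercake {E : Type*} [MeasurableSpace E] (μ : Measure E) [SFinite μ]
    (g : E → ℝ) (hg : Measurable g) (hg0 : ∀ᵐ x ∂μ, 0 ≤ g x)
    (k : ℝ → ℝ) (hk : Continuous k) (hk0 : ∀ t, 0 < t → 0 ≤ k t)
    (hki : ∀ a : ℝ, 0 ≤ a → IntegrableOn k (Ioi a)) :
    ∫⁻ x, ENNReal.ofReal (∫ t in Ioi (g x), k t) ∂μ
      = ∫⁻ t in Ioi (0:ℝ), ENNReal.ofReal (k t) * μ {x | g x ≤ t} := by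
  have hSet : MeasurableSet {q : E × ℝ | g q.1 ≤ q.2} := by
    exact measurableSet_le (hg.comp measurable_fst) measurable_snd
  set f : E × ℝ → ℝ≥0∞ :=
    fun q => {q : E × ℝ | g q.1 ≤ q.2}.indicator (fun q => ENNReal.ofReal (k q.2)) q with hf
  have hfm : Measurable f :=
    ((ENNReal.measurable_ofReal.comp (hk.measurable.comp measurable_snd))).indicator hSet
  have step1 : ∫⁻ x, ENNReal.ofReal (∫ t in Ioi (g x), k t) ∂μ
      = ∫⁻ x, (∫⁻ t in Ioi (0:ℝ), f (x, t)) ∂μ := by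
    refine lintegral_congr_ae (hg0.mono fun x hx => ?_)
    have h1 : ENNReal.ofReal (∫ t in Ioi (g x), k t)
        = ∫⁻ t in Ioi (g x), ENNReal.ofReal (k t) := by
      refine ofReal_integral_eq_lintegral_ofReal (hki _ hx) ?_
      refine (ae_restrict_iff' measurableSet_Ioi).2 (ae_of_all _ fun t ht => ?_)
      exact hk0 t (lt_of_le_of_lt hx ht)
    have h2 : (Ici (g x) ∩ Ioi (0:ℝ) : Set ℝ) =ᵐ[volume] (Ioi (g x) : Set ℝ) := by
      rw [Filter.eventuallyEq_set]
      have : ∀ t : ℝ, t ≠ g x → (t ∈ Ici (g x) ∩ Ioi (0:ℝ) ↔ t ∈ Ioi (g x)) := by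
        intro t ht
        simp only [mem_inter_iff, mem_Ici, mem_Ioi]
        constructor
        · rintro ⟨h1, _⟩; exact lt_of_le_of_ne h1 (Ne.symm ht)
        · intro h1; exact ⟨le_of_lt h1, lt_of_le_of_lt hx h1⟩
      have hsing : volume ({g x} : Set ℝ) = 0 := measure_singleton _
      filter_upwards [measure_eq_zero_iff_ae_notMem.1 hsing] with t ht
      exact this t ht
    have h3 : ∫⁻ t in Ioi (0:ℝ), f (x, t)
        = ∫⁻ t in Ici (g x) ∩ Ioi (0:ℝ), ENNReal.ofReal (k t) := by
      have : (fun t : ℝ => f (x, t))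
          = fun t => (Ici (g x)).indicator (fun t => ENNReal.ofReal (k t)) t := by
        funext t
        by_cases hgt : g x ≤ t <;>
          simp [hf, Set.indicator, hgt]
      rw [this, lintegral_indicator measurableSet_Ici, Measure.restrict_restrict measurableSet_Ici]
    show ENNReal.ofReal (∫ t in Ioi (g x), k t) = ∫⁻ t in Ioi (0:ℝ), f (x, t)
    rw [h1, h3, setLIntegral_congr h2]
  rw [step1, lintegral_lintegral_swap hfm.aemeasurable]
  refine setLIntegral_congr_fun measurableSet_Ioi (fun t ht => ?_)
  have h4 : (fun x => f (x, t))
      = fun x => {x : E | g x ≤ t}.indicator (fun _ => ENNReal.ofReal (k t)) x := by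
    funext x
    by_cases hgt : g x ≤ t <;> simp [hf, Set.indicator, hgt]
  rw [h4, lintegral_indicator (measurableSet_le hg measurable_const), setLIntegral_const]

lemma core_compare (n : ℕ) (F : ℝ → ℝ≥0∞) (hF : Measurable F) (C : ℝ≥0∞) (hC : C ≠ ⊤)
    (hFC : ∀ t, F t ≤ C)
    (hscale : ∀ t s : ℝ, 0 < t → t ≤ s → ENNReal.ofReal (t^n) * F s ≤ ENNReal.ofReal (s^n) * F t) :
    ∫⁻ t in Ioi (0:ℝ), ENNReal.ofReal (t * Real.exp (-t)) * F t
      ≤ ENNReal.ofReal ((n:ℝ)+1) * ∫⁻ t in Ioi (0:ℝ), ENNReal.ofReal (Real.exp (-t)) * F t := by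
  set a : ℝ := (n:ℝ)+1 with ha_def
  have ha : 0 < a := by positivity
  set Jm := ∫⁻ t in Ioc (0:ℝ) a, ENNReal.ofReal ((a-t) * Real.exp (-t)) * F t with hJm
  set Jp := ∫⁻ t in Ioi a, ENNReal.ofReal ((t-a) * Real.exp (-t)) * F t with hJp
  have hsplit : (Ioc (0:ℝ) a) ∪ (Ioi a) = Ioi (0:ℝ) := Ioc_union_Ioi_eq_Ioi ha.le
  have hdisj : Disjoint (Ioc (0:ℝ) a) (Ioi a) := by
    rw [Set.disjoint_left]
    rintro x ⟨_, h2⟩ h3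
    exact absurd h3 (not_lt.2 h2)
  have hmeas : ∀ k : ℝ → ℝ, Measurable k →
      Measurable (fun t => ENNReal.ofReal (k t) * F t) := fun k hk =>
    (ENNReal.measurable_ofReal.comp hk).mul hF
  -- identity
  have key : (∫⁻ t in Ioi (0:ℝ), ENNReal.ofReal (t * Real.exp (-t)) * F t) + Jm
      = (ENNReal.ofReal a * ∫⁻ t in Ioi (0:ℝ), ENNReal.ofReal (Real.exp (-t)) * F t) + Jp := by
    have hsplit2 : ∀ k : ℝ → ℝ, Measurable k →
        (∫⁻ t in Ioi (0:ℝ), ENNReal.ofReal (k t) * F t)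
          = (∫⁻ t in Ioc (0:ℝ) a, ENNReal.ofReal (k t) * F t)
            + ∫⁻ t in Ioi a, ENNReal.ofReal (k t) * F t := by
      intro k hk
      rw [← hsplit, lintegral_union measurableSet_Ioi hdisj]
    rw [hsplit2 _ (by fun_prop), hsplit2 (fun t => Real.exp (-t)) (by fun_prop)]
    have e1 : (∫⁻ t in Ioc (0:ℝ) a, ENNReal.ofReal (t * Real.exp (-t)) * F t) + Jm
        = ∫⁻ t in Ioc (0:ℝ) a, ENNReal.ofReal (a * Real.exp (-t)) * F t := by
      rw [hJm, ← lintegral_add_left (hmeas _ (by fun_prop))]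
      refine setLIntegral_congr_fun measurableSet_Ioc (fun t ht => ?_)
      rw [← add_mul, ← ENNReal.ofReal_add (mul_nonneg ht.1.le (exp_nonneg _))
        (mul_nonneg (by linarith [ht.2]) (exp_nonneg _))]
      congr 2
      ring
    have e2 : (∫⁻ t in Ioi a, ENNReal.ofReal (t * Real.exp (-t)) * F t)
        = (∫⁻ t in Ioi a, ENNReal.ofReal (a * Real.exp (-t)) * F t) + Jp := by
      rw [hJp, ← lintegral_add_left (hmeas _ (by fun_prop))]
      refine setLIntegral_congr_fun measurableSet_Ioi (fun t ht => ?_)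
      simp only [mem_Ioi] at ht
      rw [← add_mul, ← ENNReal.ofReal_add (mul_nonneg (by linarith) (exp_nonneg _))
        (mul_nonneg (by linarith) (exp_nonneg _))]
      congr 2
      ring
    have e3 : ∀ s : Set ℝ, MeasurableSet s → ENNReal.ofReal a *
        (∫⁻ t in s, ENNReal.ofReal (Real.exp (-t)) * F t)
          = ∫⁻ t in s, ENNReal.ofReal (a * Real.exp (-t)) * F t := by
      intro s hs
      rw [← lintegral_const_mul _ (hmeas _ (by fun_prop))]
      refine setLIntegral_congr_fun hs (fun t ht => ?_)
      rw [← mul_assoc, ← ENNReal.ofReal_mul ha.le]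
    rw [mul_add, e3 _ measurableSet_Ioc, e3 _ measurableSet_Ioi]
    calc (∫⁻ t in Ioc (0:ℝ) a, ENNReal.ofReal (t * Real.exp (-t)) * F t)
          + (∫⁻ t in Ioi a, ENNReal.ofReal (t * Real.exp (-t)) * F t) + Jm
        = ((∫⁻ t in Ioc (0:ℝ) a, ENNReal.ofReal (t * Real.exp (-t)) * F t) + Jm)
          + (∫⁻ t in Ioi a, ENNReal.ofReal (t * Real.exp (-t)) * F t) := by ring
      _ = (∫⁻ t in Ioc (0:ℝ) a, ENNReal.ofReal (a * Real.exp (-t)) * F t)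
          + ((∫⁻ t in Ioi a, ENNReal.ofReal (a * Real.exp (-t)) * F t) + Jp) := by rw [e1, e2]
      _ = (∫⁻ t in Ioc (0:ℝ) a, ENNReal.ofReal (a * Real.exp (-t)) * F t)
          + (∫⁻ t in Ioi a, ENNReal.ofReal (a * Real.exp (-t)) * F t) + Jp := by ring
  -- Jp ≤ Jm
  have hwIoi : ∫ s in Ioi a, (s - a) * s ^ n * Real.exp (-s)
      = a ^ (n+1) * Real.exp (-a) := integral_w_Ioi n
  have hwIoc : ∫ s in Ioc (0:ℝ) a, (a - s) * s ^ n * Real.exp (-s)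
      = a ^ (n+1) * Real.exp (-a) := integral_w_Ioc n
  have hple : ENNReal.ofReal (a^n) * Jp ≤ ENNReal.ofReal (a ^ (n+1) * Real.exp (-a)) * F a := by
    rw [hJp, ← lintegral_const_mul _ (hmeas _ (by fun_prop))]
    calc ∫⁻ t in Ioi a, ENNReal.ofReal (a^n) * (ENNReal.ofReal ((t-a) * Real.exp (-t)) * F t)
        ≤ ∫⁻ t in Ioi a, ENNReal.ofReal ((t-a) * t^n * Real.exp (-t)) * F a := by
          refine setLIntegral_mono' measurableSet_Ioi fun t ht => ?_
          simp only [mem_Ioi] at ht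
          have ht0 : (0:ℝ) < t := lt_trans ha ht
          calc ENNReal.ofReal (a^n) * (ENNReal.ofReal ((t-a) * Real.exp (-t)) * F t)
              = ENNReal.ofReal ((t-a) * Real.exp (-t)) * (ENNReal.ofReal (a^n) * F t) := by ring
            _ ≤ ENNReal.ofReal ((t-a) * Real.exp (-t)) * (ENNReal.ofReal (t^n) * F a) :=
                mul_le_mul_right (hscale a t ha ht.le) _
            _ = ENNReal.ofReal ((t-a) * t^n * Real.exp (-t)) * F a := by
                rw [← mul_assoc, ← ENNReal.ofReal_mul (by nlinarith [exp_nonneg (-t)])]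
                congr 2
                ring
      _ = ENNReal.ofReal (a ^ (n+1) * Real.exp (-a)) * F a := by
          rw [lintegral_mul_const _ (by fun_prop), ← hwIoi,
            ← ofReal_integral_eq_lintegral_ofReal (integrableOn_w_Ioi n)]
          refine (ae_restrict_iff' measurableSet_Ioi).2 (ae_of_all _ fun t ht => ?_)
          simp only [mem_Ioi] at ht
          have ht0 : (0:ℝ) < t := lt_trans ha ht
          have h1 : (0:ℝ) ≤ t - a := by linarith
          exact mul_nonneg (mul_nonneg h1 (pow_nonneg ht0.le n)) (exp_nonneg _)
  have hmle : ENNReal.ofReal (a ^ (n+1) * Real.exp (-a)) * F a ≤ ENNReal.ofReal (a^n) * Jm := by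
    rw [hJm, ← lintegral_const_mul _ (hmeas _ (by fun_prop))]
    calc ENNReal.ofReal (a ^ (n+1) * Real.exp (-a)) * F a
        = ∫⁻ t in Ioc (0:ℝ) a, ENNReal.ofReal ((a-t) * t^n * Real.exp (-t)) * F a := by
          rw [lintegral_mul_const _ (by fun_prop), ← hwIoc,
            ← ofReal_integral_eq_lintegral_ofReal]
          · exact (continuous_const.sub continuous_id |>.mul (continuous_pow n)
              |>.mul (Real.continuous_exp.comp continuous_neg)).integrableOn_Ioc
          · refine (ae_restrict_iff' measurableSet_Ioc).2 (ae_of_all _ fun t ht => ?_)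
            have h1 : (0:ℝ) ≤ a - t := by linarith [ht.2]
            exact mul_nonneg (mul_nonneg h1 (pow_nonneg ht.1.le n)) (exp_nonneg _)
      _ ≤ ∫⁻ t in Ioc (0:ℝ) a, ENNReal.ofReal (a^n) * (ENNReal.ofReal ((a-t) * Real.exp (-t)) * F t) := by
          refine setLIntegral_mono' measurableSet_Ioc fun t ht => ?_
          calc ENNReal.ofReal ((a-t) * t^n * Real.exp (-t)) * F a
              = ENNReal.ofReal ((a-t) * Real.exp (-t)) * (ENNReal.ofReal (t^n) * F a) := by
                rw [← mul_assoc, ← ENNReal.ofReal_mul (mul_nonneg (by linarith [ht.2]) (exp_nonneg _))]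
                congr 2
                ring
            _ ≤ ENNReal.ofReal ((a-t) * Real.exp (-t)) * (ENNReal.ofReal (a^n) * F t) :=
                mul_le_mul_right (hscale t a ht.1 ht.2) _
            _ = ENNReal.ofReal (a^n) * (ENNReal.ofReal ((a-t) * Real.exp (-t)) * F t) := by ring
  have han : ENNReal.ofReal (a^n) ≠ 0 := by
    simp [ENNReal.ofReal_eq_zero, not_le]
    positivity
  have hJpJm : Jp ≤ Jm := by
    have := le_trans hple hmle
    exact (ENNReal.mul_le_mul_iff_right han ENNReal.ofReal_ne_top).1 this
  have hJmfin : Jm ≠ ⊤ := by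
    have hb : Jm ≤ ENNReal.ofReal a * C * volume (Ioc (0:ℝ) a) := by
      rw [hJm]
      calc ∫⁻ t in Ioc (0:ℝ) a, ENNReal.ofReal ((a-t) * Real.exp (-t)) * F t
          ≤ ∫⁻ _ in Ioc (0:ℝ) a, ENNReal.ofReal a * C := by
            refine setLIntegral_mono' measurableSet_Ioc fun t ht => ?_
            refine mul_le_mul' (ENNReal.ofReal_le_ofReal ?_) (hFC t)
            calc (a-t) * Real.exp (-t) ≤ (a-t) * 1 := by
                  refine mul_le_mul_of_nonneg_left (exp_le_one_iff.2 (by linarith [ht.1])) (by linarith [ht.2])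
              _ ≤ a := by linarith [ht.1]
        _ = ENNReal.ofReal a * C * volume (Ioc (0:ℝ) a) := by rw [setLIntegral_const]
    refine ne_top_of_le_ne_top ?_ hb
    refine ENNReal.mul_ne_top (ENNReal.mul_ne_top ENNReal.ofReal_ne_top hC) ?_
    simp [Real.volume_Ioc]
  have := key.le.trans (add_le_add_right hJpJm _)
  exact (ENNReal.add_le_add_iff_right hJmfin).1 this
/-- Kalai-Vempala bound (extended to convex functions by De Klerk and Laurent): for a convex
body `K ⊆ ℝⁿ`, a convex function `h` and temperature `T > 0`, the Boltzmann mean of `h`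
satisfies `E[h(X)] ≤ nT + min_K h`. -/
theorem boltzmann_mean_le {n : ℕ} (K : Set (EuclideanSpace ℝ (Fin n)))
    (hKconv : Convex ℝ K) (hKcomp : IsCompact K) (hKint : (interior K).Nonempty)
    (h : EuclideanSpace ℝ (Fin n) → ℝ) (hconv : ConvexOn ℝ Set.univ h)
    (T : ℝ) (hT : 0 < T) :
    (∫ x in K, h x * Real.exp (-h x / T)) / (∫ x in K, Real.exp (-h x / T))
      ≤ n * T + sInf (h '' K) := by
  classical
  have hcont : Continuous h := hconv.locallyLipschitz.continuous
  have hKne : K.Nonempty := hKint.mono interior_subset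
  obtain ⟨x₀, hx₀K, hmin⟩ := hKcomp.exists_isMinOn hKne hcont.continuousOn
  set m := h x₀ with hm
  have hsInf : sInf (h '' K) = m := by
    refine IsLeast.csInf_eq ⟨⟨x₀, hx₀K, rfl⟩, ?_⟩
    rintro y ⟨z, hz, rfl⟩
    exact hmin hz
  set g : EuclideanSpace ℝ (Fin n) → ℝ := fun x => (h x - m) / T with hgdef
  have hgc : Continuous g := (hcont.sub continuous_const).div_const T
  have hgm : Measurable g := hgc.measurable
  have hg0 : ∀ x ∈ K, 0 ≤ g x := fun x hx => div_nonneg (sub_nonneg.2 (hmin hx)) hT.le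
  have hKmeas : MeasurableSet K := hKcomp.isClosed.measurableSet
  have hg0' : ∀ᵐ x ∂(volume.restrict K), 0 ≤ g x :=
    (ae_restrict_iff' hKmeas).2 (ae_of_all _ hg0)
  set F : ℝ → ℝ≥0∞ := fun t => volume ({x | g x ≤ t} ∩ K) with hFdef
  have hFmono : Monotone F := fun s t hst =>
    measure_mono (inter_subset_inter_left _ (fun x hx => le_trans hx hst))
  have hFmeas : Measurable F := hFmono.measurable
  have hrest : ∀ t : ℝ, (volume.restrict K) {x | g x ≤ t} = F t := fun t =>
    Measure.restrict_apply (measurableSet_le hgm measurable_const)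
  -- layer cake for exp (-g)
  have lc1 : (∫⁻ x in K, ENNReal.ofReal (Real.exp (-(g x))))
      = ∫⁻ t in Set.Ioi (0:ℝ), ENNReal.ofReal (Real.exp (-t)) * F t := by
    have H := my_layercake (volume.restrict K) g hgm hg0' (fun t => Real.exp (-t))
      (Real.continuous_exp.comp continuous_neg) (fun t _ => (Real.exp_nonneg _))
      (fun a _ => integrableOn_exp_Ioi a)
    simp only [integral_exp_neg_Ioi, hrest] at H
    exact H
  have lc2 : (∫⁻ x in K, ENNReal.ofReal ((g x + 1) * Real.exp (-(g x))))
      = ∫⁻ t in Set.Ioi (0:ℝ), ENNReal.ofReal (t * Real.exp (-t)) * F t := by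
    have H := my_layercake (volume.restrict K) g hgm hg0' (fun t => t * Real.exp (-t))
      (continuous_id.mul (Real.continuous_exp.comp continuous_neg))
      (fun t ht => mul_nonneg ht.le (Real.exp_nonneg _))
      (fun a ha => integrableOn_texp_Ioi ha)
    simp only [hrest] at H
    rw [← H]
    refine lintegral_congr_ae (hg0'.mono fun x hx => ?_)
    show ENNReal.ofReal ((g x + 1) * Real.exp (-(g x)))
      = ENNReal.ofReal (∫ t in Set.Ioi (g x), t * Real.exp (-t))
    rw [integral_texp_Ioi hx]
  -- scaling inequality
  have hscale : ∀ t s : ℝ, 0 < t → t ≤ s →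
      ENNReal.ofReal (t^n) * F s ≤ ENNReal.ofReal (s^n) * F t := by
    intro t s ht hts
    have hs : 0 < s := lt_of_lt_of_le ht hts
    set c : ℝ := t / s with hc_def
    have hc : 0 < c := div_pos ht hs
    have hc1 : c ≤ 1 := (div_le_one hs).2 hts
    have hcs : c * s = t := div_mul_cancel₀ t hs.ne'
    have himg : AffineMap.homothety x₀ c '' ({x | g x ≤ s} ∩ K) ⊆ {x | g x ≤ t} ∩ K := by
      rintro _ ⟨y, ⟨hys, hyK⟩, rfl⟩
      have hpt : AffineMap.homothety x₀ c y = c • y + (1 - c) • x₀ := by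
        simp [AffineMap.homothety_apply, smul_sub, sub_smul, one_smul]
        abel
      constructor
      · have hhb : h (c • y + (1 - c) • x₀) ≤ c * h y + (1 - c) * m :=
          hconv.2 (Set.mem_univ y) (Set.mem_univ x₀) hc.le (by linarith) (by ring)
        have : g (AffineMap.homothety x₀ c y) ≤ c * g y := by
          rw [hpt, hgdef]
          simp only
          rw [div_le_iff₀ hT]
          calc h (c • y + (1 - c) • x₀) - m ≤ c * (h y - m) := by linarith
            _ ≤ c * g y * T := by
                rw [hgdef]
                simp only
                rw [mul_assoc, div_mul_cancel₀ _ hT.ne']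
        have hgy : g y ≤ s := hys
        calc g (AffineMap.homothety x₀ c y) ≤ c * g y := this
          _ ≤ c * s := by nlinarith
          _ = t := hcs
      · rw [hpt]
        exact hKconv hyK hx₀K hc.le (by linarith) (by ring)
    have hvol : volume (AffineMap.homothety x₀ c '' ({x | g x ≤ s} ∩ K))
        = ENNReal.ofReal (c^n) * F s := by
      rw [Measure.addHaar_image_homothety]
      congr 2
      rw [abs_of_nonneg (pow_nonneg hc.le _), finrank_euclideanSpace_fin]
    have hle : ENNReal.ofReal (c^n) * F s ≤ F t := by
      rw [← hvol]
      exact measure_mono himg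
    calc ENNReal.ofReal (t^n) * F s
        = ENNReal.ofReal (s^n) * (ENNReal.ofReal (c^n) * F s) := by
          rw [← mul_assoc, ← ENNReal.ofReal_mul (pow_nonneg hs.le _)]
          congr 2
          rw [← mul_pow, mul_comm s c, hcs]
      _ ≤ ENNReal.ofReal (s^n) * F t := mul_le_mul_right hle _
  -- core comparison
  have hcore := core_compare n F hFmeas (volume K) hKcomp.measure_lt_top.ne
    (fun t => measure_mono Set.inter_subset_right) hscale
  -- Bochner integrals
  set D := ∫ x in K, Real.exp (-(g x)) with hD_def
  set N := ∫ x in K, g x * Real.exp (-(g x)) with hN_def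
  have hInt1 : IntegrableOn (fun x => Real.exp (-(g x))) K volume :=
    ((Real.continuous_exp.comp hgc.neg).continuousOn).integrableOn_compact hKcomp
  have hInt2 : IntegrableOn (fun x => g x * Real.exp (-(g x))) K volume :=
    ((hgc.mul (Real.continuous_exp.comp hgc.neg)).continuousOn).integrableOn_compact hKcomp
  have hD : ENNReal.ofReal D = ∫⁻ x in K, ENNReal.ofReal (Real.exp (-(g x))) :=
    ofReal_integral_eq_lintegral_ofReal hInt1 (ae_of_all _ fun x => Real.exp_nonneg _)
  have hND : ENNReal.ofReal (N + D) = ∫⁻ x in K, ENNReal.ofReal ((g x + 1) * Real.exp (-(g x))) := by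
    have hadd : N + D = ∫ x in K, (g x + 1) * Real.exp (-(g x)) := by
      rw [hN_def, hD_def, ← integral_add hInt2 hInt1]
      congr 1
      funext x
      ring
    rw [hadd]
    refine ofReal_integral_eq_lintegral_ofReal ?_ ?_
    · exact (((hgc.add continuous_const).mul (Real.continuous_exp.comp hgc.neg)).continuousOn).integrableOn_compact hKcomp
    · exact hg0'.mono fun x hx => mul_nonneg (by linarith) (Real.exp_nonneg _)
  -- conclude N ≤ n * D
  have hchain : ENNReal.ofReal (N + D) ≤ ENNReal.ofReal (((n:ℝ)+1) * D) := by
    rw [hND, lc2]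
    refine le_trans hcore ?_
    rw [ENNReal.ofReal_mul (by positivity), hD, lc1]
  have hDnonneg : 0 ≤ D :=
    setIntegral_nonneg hKmeas fun x _ => Real.exp_nonneg _
  have hNnD : N ≤ (n:ℝ) * D := by
    have := (ENNReal.ofReal_le_ofReal_iff (by positivity)).1 hchain
    linarith
  -- positivity of D
  have hDpos : 0 < D := by
    rw [hD_def]
    rw [setIntegral_pos_iff_support_of_nonneg_ae
      (ae_of_all _ fun x => Real.exp_nonneg _) hInt1]
    have hsupp : (Function.support fun x => Real.exp (-(g x))) = Set.univ := by
      ext x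
      simp [Function.support, Real.exp_ne_zero]
    rw [hsupp, Set.univ_inter]
    exact lt_of_lt_of_le (isOpen_interior.measure_pos volume hKint)
      (measure_mono interior_subset)
  -- final algebra
  have hsub : ∀ x, h x = m + T * g x := by
    intro x
    rw [hgdef]
    field_simp
    ring
  have hexp : ∀ x, Real.exp (-h x / T) = Real.exp (-m/T) * Real.exp (-(g x)) := by
    intro x
    rw [← Real.exp_add]
    congr 1
    rw [hgdef]
    field_simp
    ring
  have hden : (∫ x in K, Real.exp (-h x / T)) = Real.exp (-m/T) * D := by
    rw [hD_def, ← integral_const_mul]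
    congr 1
    funext x
    rw [hexp x]
  have hnum : (∫ x in K, h x * Real.exp (-h x / T))
      = Real.exp (-m/T) * (m * D + T * N) := by
    have : (fun x => h x * Real.exp (-h x / T))
        = fun x => Real.exp (-m/T) * (m * Real.exp (-(g x)) + T * (g x * Real.exp (-(g x)))) := by
      funext x
      rw [hexp x, hsub x]
      ring
    rw [this, integral_const_mul]
    congr 1
    rw [integral_add (hInt1.const_mul m) (hInt2.const_mul T), integral_const_mul, integral_const_mul]
  rw [hnum, hden, hsInf, mul_div_mul_left _ _ (Real.exp_ne_zero _), div_le_iff₀ hDpos]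
  nlinarith [hNnD, hT.le, hDnonneg]
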